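/- (Sundman) Suppose I : (0,t_0] → (0,∞) is C², İ > 0 on (0,t_0), I(t) → 0 as t → 0⁺, and along the motion İ·Ï ≥ (İ/I)·C + 2h·İ where C(t) ≥ C_0 ≥ 0 for all t and h ∈ ℝ is a constant. Then C_0 = 0; i.e., inf C = 0. In particular, if C(t) = |δ∧δ̇|² ≥ |Ω|² is bounded below by the constant squared norm of the angular momentum, the angular momentum Ω of a triple-collision motion must vanish. -/

import Mathlib

noncomputable section

/-- Auxiliary: if `f` has nonnegative derivative on an interval, it is monotone
on that interval (endpoint comparison). -/
lemma sundman_mono_aux (f f' : ℝ → ℝ) (a b : ℝ) (hab : a ≤ b)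
    (hd : ∀ x ∈ Set.Icc a b, HasDerivAt f (f' x) x)
    (h0 : ∀ x ∈ Set.Ioo a b, 0 ≤ f' x) : f a ≤ f b := by
  have hcont : ContinuousOn f (Set.Icc a b) :=
    fun x hx => (hd x hx).continuousAt.continuousWithinAt
  have hint : interior (Set.Icc a b) = Set.Ioo a b := interior_Icc
  have hdiff : DifferentiableOn ℝ f (interior (Set.Icc a b)) := by
    rw [hint]
    exact fun x hx => ((hd x (Set.Ioo_subset_Icc_self hx)).differentiableAt).differentiableWithinAt
  have hderiv : ∀ x ∈ interior (Set.Icc a b), 0 ≤ deriv f x := by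
    rw [hint]
    intro x hx
    rw [(hd x (Set.Ioo_subset_Icc_self hx)).deriv]
    exact h0 x hx
  exact monotoneOn_of_deriv_nonneg (convex_Icc a b) hcont hdiff hderiv
    (Set.left_mem_Icc.mpr hab) (Set.right_mem_Icc.mpr hab) hab

/-- Sundman: if `I : (0, t₀] → (0, ∞)` is twice differentiable
with `İ > 0` on `(0, t₀)`, `I(t) → 0` as `t → 0⁺`, and
`İ·Ï ≥ (İ/I)·C + 2h·İ` where `C(t) ≥ C₀ ≥ 0`, then `C₀ = 0`.  In particular,
taking `C = |δ∧δ̇|² ≥ |Ω|²`, the angular momentum of a triple-collision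
motion must vanish. -/
theorem sundman_vanishing_angular_momentum
    (t0 h C0 : ℝ) (ht0 : 0 < t0)
    (I I' I'' C : ℝ → ℝ)
    (hIpos : ∀ t ∈ Set.Ioc 0 t0, 0 < I t)
    (hd1 : ∀ t ∈ Set.Ioo 0 t0, HasDerivAt I (I' t) t)
    (hd2 : ∀ t ∈ Set.Ioo 0 t0, HasDerivAt I' (I'' t) t)
    (hI'pos : ∀ t ∈ Set.Ioo 0 t0, 0 < I' t)
    (hlim : Filter.Tendsto I (nhdsWithin 0 (Set.Ioi 0)) (nhds 0))
    (hineq : ∀ t ∈ Set.Ioo 0 t0, I' t * I'' t ≥ (I' t / I t) * C t + 2 * h * I' t)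
    (hC : ∀ t ∈ Set.Ioo 0 t0, C0 ≤ C t)
    (hC0 : 0 ≤ C0) :
    C0 = 0 := by
  by_contra hne
  have hC0pos : 0 < C0 := lt_of_le_of_ne hC0 (Ne.symm hne)
  set t1 : ℝ := t0 / 2 with ht1def
  have ht1 : t1 ∈ Set.Ioo 0 t0 := ⟨by positivity, by linarith⟩
  -- the Lyapunov-type function G
  set G : ℝ → ℝ := fun t => (1:ℝ)/2 * (I' t)^2 - C0 * Real.log (I t) - 2 * h * I t with hGdef
  set G' : ℝ → ℝ := fun t => I' t * I'' t - C0 * (I' t / I t) - 2 * h * I' t with hG'def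
  have hGd : ∀ t ∈ Set.Ioo 0 t0, HasDerivAt G (G' t) t := by
    intro t ht
    have hIt : 0 < I t := hIpos t ⟨ht.1, le_of_lt ht.2⟩
    have h1 := ((hd2 t ht).pow 2).const_mul ((1:ℝ)/2)
    have h2 : HasDerivAt (fun x => C0 * Real.log (I x)) (C0 * (I' t / I t)) t :=
      ((hd1 t ht).log hIt.ne').const_mul _
    have h3 : HasDerivAt (fun x => 2 * h * I x) (2 * h * I' t) t :=
      (hd1 t ht).const_mul _
    have := (h1.sub h2).sub h3
    refine this.congr_deriv ?_
    push_cast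
    ring
  have hG'nonneg : ∀ t ∈ Set.Ioo 0 t0, 0 ≤ G' t := by
    intro t ht
    have hIt : 0 < I t := hIpos t ⟨ht.1, le_of_lt ht.2⟩
    have hq : 0 < I' t / I t := div_pos (hI'pos t ht) hIt
    have hCt := hC t ht
    have := hineq t ht
    have key : (I' t / I t) * C0 ≤ (I' t / I t) * C t :=
      mul_le_mul_of_nonneg_left hCt (le_of_lt hq)
    simp only [hG'def]
    nlinarith [mul_pos hq hC0pos]
  -- monotonicity consequences on (0, t1]
  have hGmono : ∀ t ∈ Set.Ioo 0 t1, G t ≤ G t1 := by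
    intro t ht
    refine sundman_mono_aux G G' t t1 (le_of_lt ht.2) ?_ ?_
    · intro x hx
      exact hGd x ⟨lt_of_lt_of_le ht.1 hx.1, lt_of_le_of_lt hx.2 ht1.2⟩
    · intro x hx
      exact hG'nonneg x ⟨lt_trans ht.1 hx.1, lt_trans hx.2 ht1.2⟩
  have hImono : ∀ t ∈ Set.Ioo 0 t1, I t ≤ I t1 := by
    intro t ht
    refine sundman_mono_aux I I' t t1 (le_of_lt ht.2) ?_ ?_
    · intro x hx
      exact hd1 x ⟨lt_of_lt_of_le ht.1 hx.1, lt_of_le_of_lt hx.2 ht1.2⟩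
    · intro x hx
      exact le_of_lt (hI'pos x ⟨lt_trans ht.1 hx.1, lt_trans hx.2 ht1.2⟩)
  -- lower bound on log (I t)
  set M : ℝ := (-(G t1) - |2 * h| * I t1) / C0 with hMdef
  have hbound : ∀ t ∈ Set.Ioo 0 t1, M ≤ Real.log (I t) := by
    intro t ht
    have hIt : 0 < I t := hIpos t ⟨ht.1, le_of_lt (lt_trans ht.2 ht1.2)⟩
    have h1 : G t ≤ G t1 := hGmono t ht
    have h2 : I t ≤ I t1 := hImono t ht
    have hsq : 0 ≤ (1:ℝ)/2 * (I' t)^2 := by positivity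
    have habs : -(2 * h * I t) ≥ -(|2 * h| * I t1) := by
      have : |2 * h * I t| ≤ |2 * h| * I t1 := by
        rw [abs_mul, abs_of_pos hIt]
        exact mul_le_mul_of_nonneg_left h2 (abs_nonneg _)
      have := le_abs_self (2 * h * I t)
      linarith
    have key : -(G t1) - |2 * h| * I t1 ≤ Real.log (I t) * C0 := by
      simp only [hGdef] at h1 ⊢
      have : Real.log (I t) * C0 = C0 * Real.log (I t) := mul_comm _ _
      linarith
    rw [hMdef, div_le_iff₀ hC0pos]
    exact key
  -- log (I t) → -∞ as t → 0⁺
  have hIin : Filter.Tendsto I (nhdsWithin 0 (Set.Ioi 0)) (nhdsWithin 0 (Set.Ioi 0)) := by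
    rw [tendsto_nhdsWithin_iff]
    refine ⟨hlim, ?_⟩
    filter_upwards [Ioc_mem_nhdsGT ht0] with t ht
    exact hIpos t ht
  have hlog : Filter.Tendsto (fun t => Real.log (I t)) (nhdsWithin 0 (Set.Ioi 0)) Filter.atBot :=
    Real.tendsto_log_nhdsGT_zero.comp hIin
  have hev1 : ∀ᶠ t in nhdsWithin 0 (Set.Ioi 0), Real.log (I t) < M :=
    hlog.eventually (Filter.eventually_lt_atBot M)
  have hev2 : ∀ᶠ t in nhdsWithin 0 (Set.Ioi 0), M ≤ Real.log (I t) := by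
    filter_upwards [Ioo_mem_nhdsGT ht1.1] with t ht
    exact hbound t ht
  haveI : (nhdsWithin (0:ℝ) (Set.Ioi 0)).NeBot := nhdsGT_neBot 0
  have hfalse : ∀ᶠ t in nhdsWithin (0:ℝ) (Set.Ioi 0), False := by
    filter_upwards [hev1, hev2] with t ha hb
    linarith
  exact (hfalse.exists).elim (fun _ hf => hf)
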